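/- arXiv:2506.15940 — 8 statements merged into one kernel-verified Lean document; each statement's English description precedes it below -/
import Mathlib

section
/- Let H and W be positive integers, A : Fin H → Matrix (Fin W) (Fin W) ℝ, B : Fin W → Matrix (Fin H) (Fin H) ℝ, and let M^A and M^B be the associated horizontal-type and vertical-type matrices. Then for every vector x : Fin H × Fin W → ℝ and every (i,j) ∈ Fin H × Fin W, the product ((M^A * M^B).mulVec x)(i,j) equals Y_{i,j}, where Z ∈ Matrix (Fin H) (Fin W) ℝ is defined column-wise by Z_{i,l} = ∑_{k ∈ Fin H} B^l_{i,k} · x(k,l) (i.e. the l-th column of Z is B^l times the l-th column of X) and Y is defined row-wise by Y_{i,j} = ∑_{l ∈ Fin W} A^i_{j,l} · Z_{i,l} (i.e. the i-th row of Y is A^i times the i-th row of Z). -/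
open Matrix

/-- **Theorem 2 (Efficient Matrix Multiplication).**
For the horizontal-type matrix `MA` and the vertical-type matrix `MB`,
`((MA * MB).mulVec x) (i,j) = Y i j`, where `Z` is computed column-wise by
`Z i l = ∑ k, B l i k * x (k,l)` and `Y` row-wise by
`Y i j = ∑ l, A i j l * Z i l`. -/
theorem efficient_matrix_multiplication (H W : ℕ) (hH : 0 < H) (hW : 0 < W)
    (A : Fin H → Matrix (Fin W) (Fin W) ℝ)
    (B : Fin W → Matrix (Fin H) (Fin H) ℝ)
    (MA MB : Matrix (Fin H × Fin W) (Fin H × Fin W) ℝ)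
    (hMA : ∀ (i k : Fin H) (j l : Fin W),
      MA (i, j) (k, l) = if k = i then A i j l else 0)
    (hMB : ∀ (i k : Fin H) (j l : Fin W),
      MB (i, j) (k, l) = if j = l then B l i k else 0)
    (x : Fin H × Fin W → ℝ)
    (Z Y : Matrix (Fin H) (Fin W) ℝ)
    (hZ : ∀ (i : Fin H) (l : Fin W), Z i l = ∑ k : Fin H, B l i k * x (k, l))
    (hY : ∀ (i : Fin H) (j : Fin W), Y i j = ∑ l : Fin W, A i j l * Z i l)
    (i : Fin H) (j : Fin W) :
    ((MA * MB).mulVec x) (i, j) = Y i j := by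
  simp only [mulVec, dotProduct, mul_apply, hY, hZ]
  rw [Fintype.sum_prod_type]
  simp only [Fintype.sum_prod_type, hMA, hMB, Finset.mul_sum, Finset.sum_mul]
  rw [Finset.sum_comm]
  refine Finset.sum_congr rfl fun k _ => ?_
  rw [Finset.sum_comm]
  simp [Finset.sum_ite_eq, Finset.mul_sum, mul_assoc]
end

section
/- Let H and W be positive integers, let α, β : Fin H → Fin W → ℝ be decay factors, and let L be the V2H polyline path mask, L_{(i,j),(k,l)} = α_{i,j:l} · β_{i:k,l}. Define the horizontal scanning mask L^H by L^H_{(i,j),(k,l)} = α_{i,j:l} if k = i and 0 otherwise, the vertical scanning mask L^V by L^V_{(i,j),(k,l)} = β_{i:k,l} if j = l and 0 otherwise, and the full matrices L̂^H_{(i,j),(k,l)} = α_{i,j:l} and L̂^V_{(i,j),(k,l)} = β_{i:k,l}. Then L = L^H * L^V (matrix product) and L = L̂^H ⊙ L̂^V (Hadamard product). -/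
open Matrix

/-- Decomposition of the V2H polyline path mask:
`L = LH * LV` (matrix product) and `L = LHhat ⊙ LVhat` (Hadamard product),
where `α i (j:l) = ∏ n ∈ Ioc (min j l) (max j l), α i n` and
`β (i:k) l = ∏ n ∈ Ioc (min i k) (max i k), β n l`. -/
theorem polyline_mask_decomposition (H W : ℕ) (hH : 0 < H) (hW : 0 < W)
    (α β : Fin H → Fin W → ℝ)
    (L LH LV LHhat LVhat : Matrix (Fin H × Fin W) (Fin H × Fin W) ℝ)
    (hL : ∀ (i k : Fin H) (j l : Fin W),
      L (i, j) (k, l) = (∏ n ∈ Finset.Ioc (min j l) (max j l), α i n)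
        * (∏ n ∈ Finset.Ioc (min i k) (max i k), β n l))
    (hLH : ∀ (i k : Fin H) (j l : Fin W),
      LH (i, j) (k, l) =
        if k = i then ∏ n ∈ Finset.Ioc (min j l) (max j l), α i n else 0)
    (hLV : ∀ (i k : Fin H) (j l : Fin W),
      LV (i, j) (k, l) =
        if j = l then ∏ n ∈ Finset.Ioc (min i k) (max i k), β n l else 0)
    (hLHhat : ∀ (i k : Fin H) (j l : Fin W),
      LHhat (i, j) (k, l) = ∏ n ∈ Finset.Ioc (min j l) (max j l), α i n)
    (hLVhat : ∀ (i k : Fin H) (j l : Fin W),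
      LVhat (i, j) (k, l) = ∏ n ∈ Finset.Ioc (min i k) (max i k), β n l) :
    L = LH * LV ∧ L = LHhat ⊙ LVhat := by
  constructor
  · ext ⟨i, j⟩ ⟨k, l⟩
    rw [Matrix.mul_apply, hL, Fintype.sum_prod_type]
    rw [Finset.sum_eq_single i]
    · rw [Finset.sum_eq_single l]
      · rw [hLH, hLV, if_pos rfl, if_pos rfl]
      · intro b _ hb
        rw [hLV, if_neg hb, mul_zero]
      · simp
    · intro a _ ha
      rw [Finset.sum_eq_zero]
      intro b _
      rw [hLH, if_neg ha, zero_mul]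
    · simp
  · ext ⟨i, j⟩ ⟨k, l⟩
    rw [Matrix.hadamard_apply, hL, hLHhat, hLVhat]
end

section
/- Let H and W be positive integers, let α, β : Fin H → Fin W → ℝ be decay factors, and let L̃ be the H2V polyline path mask, L̃_{(i,j),(k,l)} = β_{i:k,j} · α_{k,j:l}. With the horizontal scanning mask L^H (L^H_{(i,j),(k,l)} = α_{i,j:l} if k = i, else 0) and the vertical scanning mask L^V (L^V_{(i,j),(k,l)} = β_{i:k,l} if j = l, else 0), the H2V mask factors in the reversed order: L̃ = L^V * L^H. -/
open Matrix

/-- Decomposition of the H2V polyline path mask in the reversed order: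
`L̃ = LV * LH`. -/
theorem h2v_mask_decomposition (H W : ℕ) (hH : 0 < H) (hW : 0 < W)
    (α β : Fin H → Fin W → ℝ)
    (Ltil LH LV : Matrix (Fin H × Fin W) (Fin H × Fin W) ℝ)
    (hLtil : ∀ (i k : Fin H) (j l : Fin W),
      Ltil (i, j) (k, l) = (∏ n ∈ Finset.Ioc (min i k) (max i k), β n j)
        * (∏ n ∈ Finset.Ioc (min j l) (max j l), α k n))
    (hLH : ∀ (i k : Fin H) (j l : Fin W),
      LH (i, j) (k, l) =
        if k = i then ∏ n ∈ Finset.Ioc (min j l) (max j l), α i n else 0)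
    (hLV : ∀ (i k : Fin H) (j l : Fin W),
      LV (i, j) (k, l) =
        if j = l then ∏ n ∈ Finset.Ioc (min i k) (max i k), β n l else 0) :
    Ltil = LV * LH := by
  ext ⟨i, j⟩ ⟨k, l⟩
  rw [mul_apply, hLtil, Fintype.sum_prod_type]
  rw [Finset.sum_eq_single k]
  · rw [Finset.sum_eq_single j]
    · rw [hLV, hLH, if_pos rfl, if_pos rfl]
    · intro n _ hn
      rw [hLV, if_neg (fun h => hn h.symm), zero_mul]
    · simp
  · intro m _ hm
    apply Finset.sum_eq_zero
    intro n _
    rw [hLH]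
    split_ifs with h
    · exact absurd h.symm hm
    · rw [mul_zero]
  · simp
end

section
/- Let H and W be positive integers and let α, β : Fin H → Fin W → ℝ be decay factors. Then the H2V polyline path mask is the transpose of the V2H polyline path mask: for all i, k ∈ Fin H and j, l ∈ Fin W, L̃_{(i,j),(k,l)} = L_{(k,l),(i,j)}, i.e. L̃ = Lᵀ. Consequently, the 2D polyline path mask L^{2D} = L + L̃ is a symmetric matrix: (L^{2D})ᵀ = L^{2D}. -/
open Matrix

/-- The H2V polyline path mask is the transpose of the V2H polyline path mask,
and consequently the 2D polyline path mask `L + L̃` is symmetric. -/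
theorem polyline_mask_symmetry (H W : ℕ) (hH : 0 < H) (hW : 0 < W)
    (α β : Fin H → Fin W → ℝ)
    (L Ltil : Matrix (Fin H × Fin W) (Fin H × Fin W) ℝ)
    (hL : ∀ (i k : Fin H) (j l : Fin W),
      L (i, j) (k, l) = (∏ n ∈ Finset.Ioc (min j l) (max j l), α i n)
        * (∏ n ∈ Finset.Ioc (min i k) (max i k), β n l))
    (hLtil : ∀ (i k : Fin H) (j l : Fin W),
      Ltil (i, j) (k, l) = (∏ n ∈ Finset.Ioc (min i k) (max i k), β n j)
        * (∏ n ∈ Finset.Ioc (min j l) (max j l), α k n)) :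
    (∀ (i k : Fin H) (j l : Fin W), Ltil (i, j) (k, l) = L (k, l) (i, j))
      ∧ Ltil = Lᵀ ∧ (L + Ltil)ᵀ = L + Ltil := by
  have h : ∀ (i k : Fin H) (j l : Fin W), Ltil (i, j) (k, l) = L (k, l) (i, j) := by
    intro i k j l
    rw [hLtil, hL, min_comm l j, max_comm l j, min_comm k i, max_comm k i, mul_comm]
  have h2 : Ltil = Lᵀ := by
    ext ⟨i, j⟩ ⟨k, l⟩
    exact h i k j l
  refine ⟨h, h2, ?_⟩
  rw [h2]
  ext x y
  simp [Matrix.transpose_apply, add_comm]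
end

section
/- Let H and W be positive integers and let SA, A : Fin H → Matrix (Fin W) (Fin W) ℝ and SB, B : Fin W → Matrix (Fin H) (Fin H) ℝ be families of matrices. Let S^H and L^H be the horizontal-type matrices built from SA and A respectively (nonzero entries S^H_{(i,j),(i,l)} = SA^i_{j,l}, L^H_{(i,j),(i,l)} = A^i_{j,l}), and let S^V and L^V be the vertical-type matrices built from SB and B respectively (nonzero entries S^V_{(i,j),(k,j)} = SB^j_{i,k}, L^V_{(i,j),(k,j)} = B^j_{i,k}). Then (S^H * S^V) ⊙ (L^H * L^V) = (S^H ⊙ L^H) * (S^V ⊙ L^V), where ⊙ is the Hadamard product and * is matrix multiplication. -/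
open Matrix

/-- Eq. (12) of the paper: for horizontal-type matrices `SH, LH` and
vertical-type matrices `SV, LV`,
`(SH * SV) ⊙ (LH * LV) = (SH ⊙ LH) * (SV ⊙ LV)`. -/
theorem hadamard_product_factorization (H W : ℕ) (hH : 0 < H) (hW : 0 < W)
    (SA A : Fin H → Matrix (Fin W) (Fin W) ℝ)
    (SB B : Fin W → Matrix (Fin H) (Fin H) ℝ)
    (SH LH SV LV : Matrix (Fin H × Fin W) (Fin H × Fin W) ℝ)
    (hSH : ∀ (i k : Fin H) (j l : Fin W),
      SH (i, j) (k, l) = if k = i then SA i j l else 0)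
    (hLH : ∀ (i k : Fin H) (j l : Fin W),
      LH (i, j) (k, l) = if k = i then A i j l else 0)
    (hSV : ∀ (i k : Fin H) (j l : Fin W),
      SV (i, j) (k, l) = if j = l then SB l i k else 0)
    (hLV : ∀ (i k : Fin H) (j l : Fin W),
      LV (i, j) (k, l) = if j = l then B l i k else 0) :
    (SH * SV) ⊙ (LH * LV) = (SH ⊙ LH) * (SV ⊙ LV) := by
  ext ⟨i, j⟩ ⟨k, l⟩
  simp only [hadamard_apply, mul_apply, Fintype.sum_prod_type, hSH, hLH, hSV, hLV,
    ite_mul, mul_ite, zero_mul, mul_zero]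
  simp [Finset.sum_ite_eq, Finset.sum_ite_eq']
  ring
end

section
/- Let N, D, C be positive integers, a : Fin N → ℝ, B, C : Fin N → (Fin D → ℝ), and x : Fin N → (Fin C → ℝ). Define hidden states h : Fin N → Matrix (Fin D) (Fin C) ℝ recursively by h_0 = (vecMulVec B_0 x_0) (the outer product with entries (h_0)_{d,c} = B_0(d)·x_0(c)) and, for i ≥ 1, h_i = a_i • h_{i−1} + vecMulVec B_i x_i; and define outputs y_i ∈ Fin C → ℝ by y_i(c) = ∑_{d ∈ Fin D} C_i(d) · (h_i)_{d,c}. Then for every i ∈ Fin N and c ∈ Fin C, y_i(c) = ∑_{j ≤ i} (∏_{m = j+1}^{i} a_m) · (∑_{d ∈ Fin D} C_i(d) · B_j(d)) · x_j(c); equivalently, y = ((C Bᵀ) ⊙ L^{1D}) x, where L^{1D}_{i,j} = ∏_{m = j+1}^{i} a_m for i ≥ j (in particular L^{1D}_{i,i} = 1) and L^{1D}_{i,j} = 0 for i < j. -/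
open Matrix

/-- The structured-masked-attention (dual) form of the Mamba2 selective
state-space recurrence: if `h 0 = B₀ᵀ x₀`, `h i = a i • h (i-1) + Bᵢᵀ xᵢ`,
and `y i = Cᵢ (h i)`, then
`y i c = ∑ j ≤ i, (∏ m ∈ Ioc j i, a m) * (∑ d, C i d * B j d) * x j c`. -/
theorem mamba2_dual_form (N D Cdim : ℕ) (hN : 0 < N) (hD : 0 < D) (hC : 0 < Cdim)
    (a : Fin N → ℝ)
    (B C : Fin N → Fin D → ℝ)
    (x : Fin N → Fin Cdim → ℝ)
    (h : Fin N → Matrix (Fin D) (Fin Cdim) ℝ)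
    (h0 : h ⟨0, hN⟩ = vecMulVec (B ⟨0, hN⟩) (x ⟨0, hN⟩))
    (hrec : ∀ i : Fin N, (i : ℕ) ≠ 0 →
      h i = a i • h ⟨(i : ℕ) - 1, lt_of_le_of_lt (Nat.sub_le _ _) i.isLt⟩
        + vecMulVec (B i) (x i))
    (y : Fin N → Fin Cdim → ℝ)
    (hy : ∀ (i : Fin N) (c : Fin Cdim), y i c = ∑ d : Fin D, C i d * h i d c)
    (i : Fin N) (c : Fin Cdim) :
    y i c = ∑ j ∈ Finset.Iic i,
      (∏ m ∈ Finset.Ioc j i, a m) * (∑ d : Fin D, C i d * B j d) * x j c := by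
  have key : ∀ n (hn : n < N) (d : Fin D) (c : Fin Cdim),
      h ⟨n, hn⟩ d c = ∑ j ∈ Finset.Iic (⟨n, hn⟩ : Fin N),
        (∏ m ∈ Finset.Ioc j ⟨n, hn⟩, a m) * (B j d * x j c) := by
    intro n
    induction n with
    | zero =>
      intro hn d c
      have hIic : Finset.Iic (⟨0, hn⟩ : Fin N) = {⟨0, hn⟩} := by
        ext j; simp [Fin.le_def, Fin.ext_iff]
      rw [h0, hIic]
      simp [vecMulVec]
    | succ n ih =>
      intro hn d c
      have hn' : n < N := Nat.lt_of_succ_lt hn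
      have hne : ((⟨n+1, hn⟩ : Fin N) : ℕ) ≠ 0 := by simp
      have hprev : (⟨(((⟨n+1, hn⟩ : Fin N)) : ℕ) - 1,
          lt_of_le_of_lt (Nat.sub_le _ _) (⟨n+1, hn⟩ : Fin N).isLt⟩ : Fin N) = ⟨n, hn'⟩ := by
        simp
      rw [hrec ⟨n+1, hn⟩ hne, hprev]
      have hIic : Finset.Iic (⟨n+1, hn⟩ : Fin N)
          = insert (⟨n+1, hn⟩ : Fin N) (Finset.Iic (⟨n, hn'⟩ : Fin N)) := by
        ext j; simp [Fin.le_def, Fin.ext_iff, Nat.le_succ_iff]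
        omega
      have hnotmem : (⟨n+1, hn⟩ : Fin N) ∉ Finset.Iic (⟨n, hn'⟩ : Fin N) := by
        simp [Fin.le_def]
      rw [hIic, Finset.sum_insert hnotmem]
      have hIoc : ∀ j : Fin N, j ≤ (⟨n, hn'⟩ : Fin N) →
          Finset.Ioc j (⟨n+1, hn⟩ : Fin N)
            = insert (⟨n+1, hn⟩ : Fin N) (Finset.Ioc j (⟨n, hn'⟩ : Fin N)) := by
        intro j hj
        ext m
        simp only [Finset.mem_Ioc, Finset.mem_insert, Fin.le_def, Fin.lt_def, Fin.ext_iff] at *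
        omega
      have hself : Finset.Ioc (⟨n+1, hn⟩ : Fin N) (⟨n+1, hn⟩ : Fin N) = ∅ := by simp
      simp only [Matrix.add_apply, Matrix.smul_apply, smul_eq_mul, vecMulVec_apply, hself,
        Finset.prod_empty, one_mul, ih hn' d c, Finset.mul_sum]
      rw [add_comm]
      congr 1
      apply Finset.sum_congr rfl
      intro j hj
      rw [hIoc j (Finset.mem_Iic.mp hj), Finset.prod_insert (by
        simp [Finset.mem_Ioc, Fin.le_def])]
      ring
  rw [hy]
  obtain ⟨n, hn⟩ := i
  simp only [key n hn _ c, Finset.mul_sum]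
  rw [Finset.sum_comm]
  apply Finset.sum_congr rfl
  intro j _
  rw [Finset.sum_mul]
  apply Finset.sum_congr rfl
  intro d _
  ring
end

section
/- Let D, H, W be positive integers, index 3D tokens by triples (i,j,k) ∈ Fin D × Fin H × Fin W, and let α, β, γ : Fin D → Fin H → Fin W → ℝ be decay factors along the width, height, and depth axes respectively. Define cumulative products α_{i,j,k:n} = ∏_{r = min(k,n)+1}^{max(k,n)} α_{i,j,r}, β_{i,j:m,n} = ∏_{q = min(j,m)+1}^{max(j,m)} β_{i,q,n}, and γ_{i:l,m,n} = ∏_{p = min(i,l)+1}^{max(i,l)} γ_{p,m,n}. Let L^{3D} be the matrix with entries L^{3D}_{(i,j,k),(l,m,n)} = α_{i,j,k:n} · β_{i,j:m,n} · γ_{i:l,m,n}, and define L^H_{(i,j,k),(l,m,n)} = α_{i,j,k:n} if l = i and m = j (else 0), L^V_{(i,j,k),(l,m,n)} = β_{i,j:m,k} if l = i and n = k (else 0), and L^D_{(i,j,k),(l,m,n)} = γ_{i:l,j,k} if m = j and n = k (else 0). Then L^{3D} = L^H * L^V * L^D. -/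
open Matrix

/-- The 3D polyline path mask decomposes as the product of the horizontal,
vertical, and depth scanning masks: `L3D = LH * LV * LD`. -/
theorem polyline_mask_3d_decomposition (D H W : ℕ) (hD : 0 < D) (hH : 0 < H) (hW : 0 < W)
    (α β γ : Fin D → Fin H → Fin W → ℝ)
    (L3D LH LV LD : Matrix (Fin D × Fin H × Fin W) (Fin D × Fin H × Fin W) ℝ)
    (hL3D : ∀ (i l : Fin D) (j m : Fin H) (k n : Fin W),
      L3D (i, j, k) (l, m, n)
        = (∏ r ∈ Finset.Ioc (min k n) (max k n), α i j r)
          * (∏ q ∈ Finset.Ioc (min j m) (max j m), β i q n)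
          * (∏ p ∈ Finset.Ioc (min i l) (max i l), γ p m n))
    (hLH : ∀ (i l : Fin D) (j m : Fin H) (k n : Fin W),
      LH (i, j, k) (l, m, n)
        = if l = i ∧ m = j
          then ∏ r ∈ Finset.Ioc (min k n) (max k n), α i j r else 0)
    (hLV : ∀ (i l : Fin D) (j m : Fin H) (k n : Fin W),
      LV (i, j, k) (l, m, n)
        = if l = i ∧ n = k
          then ∏ q ∈ Finset.Ioc (min j m) (max j m), β i q k else 0)
    (hLD : ∀ (i l : Fin D) (j m : Fin H) (k n : Fin W),
      LD (i, j, k) (l, m, n)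
        = if m = j ∧ n = k
          then ∏ p ∈ Finset.Ioc (min i l) (max i l), γ p j k else 0) :
    L3D = LH * LV * LD := by
  ext ⟨i,j,k⟩ ⟨l,m,n⟩
  simp only [Matrix.mul_apply, Fintype.sum_prod_type, hLH, hLV, hLD, hL3D]
  simp [Finset.sum_mul, Finset.mul_sum, ite_and, Finset.sum_ite_eq, Finset.sum_ite_eq']
end

section
/- Let H and W be positive integers and let α, β : Fin H → Fin W → ℝ be decay factors. Let L^H be the horizontal scanning mask (L^H_{(i,j),(k,l)} = α_{i,j:l} if k = i, else 0) and L^V the vertical scanning mask (L^V_{(i,j),(k,l)} = β_{i:k,l} if j = l, else 0), and let L^{2D} = L + L̃ be the 2D polyline path mask. Then for every vector x : Fin H × Fin W → ℝ, L^{2D}.mulVec x = L^H.mulVec (L^V.mulVec x) + L^V.mulVec (L^H.mulVec x); that is, applying the 2D polyline path mask to a vector equals the vertical scan followed by the horizontal scan, plus the horizontal scan followed by the vertical scan. -/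
open Matrix

/-- Applying the 2D polyline path mask `L + L̃` to a vector equals the
vertical scan followed by the horizontal scan, plus the horizontal scan
followed by the vertical scan. -/
theorem polyline_mask_2d_mulVec (H W : ℕ) (hH : 0 < H) (hW : 0 < W)
    (α β : Fin H → Fin W → ℝ)
    (L Ltil LH LV : Matrix (Fin H × Fin W) (Fin H × Fin W) ℝ)
    (hL : ∀ (i k : Fin H) (j l : Fin W),
      L (i, j) (k, l) = (∏ n ∈ Finset.Ioc (min j l) (max j l), α i n)
        * (∏ n ∈ Finset.Ioc (min i k) (max i k), β n l))
    (hLtil : ∀ (i k : Fin H) (j l : Fin W),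
      Ltil (i, j) (k, l) = (∏ n ∈ Finset.Ioc (min i k) (max i k), β n j)
        * (∏ n ∈ Finset.Ioc (min j l) (max j l), α k n))
    (hLH : ∀ (i k : Fin H) (j l : Fin W),
      LH (i, j) (k, l) =
        if k = i then ∏ n ∈ Finset.Ioc (min j l) (max j l), α i n else 0)
    (hLV : ∀ (i k : Fin H) (j l : Fin W),
      LV (i, j) (k, l) =
        if j = l then ∏ n ∈ Finset.Ioc (min i k) (max i k), β n l else 0)
    (x : Fin H × Fin W → ℝ) :
    (L + Ltil).mulVec x = LH.mulVec (LV.mulVec x) + LV.mulVec (LH.mulVec x) := by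
  have h1 : L = LH * LV := by
    ext ⟨i, j⟩ ⟨k, l⟩
    rw [hL, Matrix.mul_apply]
    rw [Finset.sum_eq_single (i, l)]
    · simp [hLH, hLV]
    · rintro ⟨a, b⟩ _ hab
      rw [hLH, hLV]
      rcases eq_or_ne a i with rfl | ha
      · rcases eq_or_ne b l with rfl | hb
        · exact absurd rfl hab
        · simp [hb]
      · simp [ha]
    · intro h; exact absurd (Finset.mem_univ _) h
  have h2 : Ltil = LV * LH := by
    ext ⟨i, j⟩ ⟨k, l⟩
    rw [hLtil, Matrix.mul_apply]
    rw [Finset.sum_eq_single (k, j)]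
    · simp [hLH, hLV]
    · rintro ⟨a, b⟩ _ hab
      rw [hLH, hLV]
      rcases eq_or_ne b j with rfl | hb
      · rcases eq_or_ne a k with rfl | ha
        · exact absurd rfl hab
        · simp [Ne.symm ha]
      · simp [Ne.symm hb]
    · intro h; exact absurd (Finset.mem_univ _) h
  rw [h1, h2, Matrix.add_mulVec, Matrix.mulVec_mulVec, Matrix.mulVec_mulVec]
end
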